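/- Let 0 < γ < 1 and let k be a kernel on ℝ^n × ℝ^n satisfying the Dini-type smoothness condition with modulus ω. Then there is a constant c, depending only on n, γ and the kernel constant, such that for every cube Q with center x_Q and every locally integrable f for which the integrals below converge absolutely, writing f_2 = f·1_{(2Q)^c} and Tf_2(u) = ∫_{(2Q)^c} k(u,y) f(y) dy, one has for every z ∈ Q: |Tf_2(z) − Tf_2(x_Q)| ≤ c (∫_0^1 ω(c_n t) dt/t) · inf_{y ∈ Q} M_γ f(y). -/

import Mathlib

open MeasureTheory Set Real ENNReal Filter

noncomputable section

/-- The axis-parallel closed cube in `ℝⁿ` centered at `c` with side length `l`. -/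
def cube (n : ℕ) (c : Fin n → ℝ) (l : ℝ) : Set (Fin n → ℝ) :=
  {y | ∀ i, |y i - c i| ≤ l / 2}

/-- The `ℝ≥0∞`-valued fractional maximal function `M_{γ,r} f`:
`sup_{Q ∋ x} |Q|^γ ((1/|Q|) ∫_Q |f|^r)^{1/r}`. -/
def fracMax (n : ℕ) (γ r : ℝ) (f : (Fin n → ℝ) → ℝ) (x : Fin n → ℝ) : ℝ≥0∞ :=
  ⨆ (c : Fin n → ℝ) (l : ℝ) (_ : 0 < l) (_ : x ∈ cube n c l),
    volume (cube n c l) ^ γ *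
      ((volume (cube n c l))⁻¹ * ∫⁻ y in cube n c l, ENNReal.ofReal |f y| ^ r) ^ (1 / r)

/-- The local sharp maximal function `M^♯_{0,s,Q₀} f (x)`, the supremum over
cubes `Q` with `x ∈ Q ⊆ Q₀` of `inf_c inf {α ≥ 0 : |{y ∈ Q : |f(y) - c| > α}| < s|Q|}`. -/
def localSharp (n : ℕ) (s : ℝ) (Q₀ : Set (Fin n → ℝ)) (f : (Fin n → ℝ) → ℝ)
    (x : Fin n → ℝ) : ℝ≥0∞ :=
  ⨆ (c : Fin n → ℝ) (l : ℝ) (_ : 0 < l) (_ : x ∈ cube n c l) (_ : cube n c l ⊆ Q₀),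
    ⨅ (a : ℝ), sInf {α : ℝ≥0∞ |
      volume {y ∈ cube n c l | α < ENNReal.ofReal |f y - a|} <
        ENNReal.ofReal s * volume (cube n c l)}

/-- `T` is of weak type `(r, q)`: `|{|Tf| > λ}| ≤ (C λ⁻¹ ‖f‖_{L^r})^q`. -/
def WeakType (n : ℕ) (T : ((Fin n → ℝ) → ℝ) → (Fin n → ℝ) → ℝ) (r q : ℝ) : Prop :=
  ∃ C : ℝ, 0 < C ∧ ∀ (f : (Fin n → ℝ) → ℝ) (lam : ℝ), 0 < lam →
    volume {x | lam < |T f x|} ≤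
      (ENNReal.ofReal (C / lam) * (∫⁻ y, ENNReal.ofReal |f y| ^ r) ^ (1 / r)) ^ q

/-- `cn` is a dimensional constant for which `|x-x'|/|x-y| ≤ cn 2^{-m}`
whenever `x, x' ∈ Q` and `y ∉ 2^m Q`. -/
def DimConst (n : ℕ) (cn : ℝ) : Prop :=
  0 < cn ∧ ∀ (c : Fin n → ℝ) (l : ℝ), 0 < l → ∀ m : ℕ, 1 ≤ m →
    ∀ x x' y, x ∈ cube n c l → x' ∈ cube n c l → y ∉ cube n c (2 ^ m * l) →
      ‖x - x'‖ ≤ cn * 2 ^ (-(m : ℝ)) * ‖x - y‖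

/-- Dini-type smoothness condition for the kernel `k` of a fractional type operator
of order `γ`, with modulus `ω`. -/
def DiniKernel (n : ℕ) (γ : ℝ) (k : (Fin n → ℝ) → (Fin n → ℝ) → ℝ)
    (ω : ℝ → ℝ) (cn : ℝ) : Prop :=
  (∀ ⦃s t : ℝ⦄, 0 < s → s ≤ t → ω s ≤ ω t) ∧ (∀ t, 0 < t → 0 ≤ ω t) ∧
  IntegrableOn (fun t => ω (cn * t) / t) (Set.Ioo (0 : ℝ) 1) ∧
  ∃ C > 0, ∀ (c : Fin n → ℝ) (l : ℝ), 0 < l →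
    ∀ x x' y, x ∈ cube n c l → x' ∈ cube n c l → y ∉ cube n c (2 * l) →
      |k x y - k x' y| ≤
        C * ‖x - y‖ ^ (-((n : ℝ) * (1 - γ))) * ω (‖x - x'‖ / ‖x - y‖)

/-- The (maximal) median of `g` over the cube `Q(c,l)` with parameter `t`. -/
def medianOn (n : ℕ) (g : (Fin n → ℝ) → ℝ) (t : ℝ) (c : Fin n → ℝ) (l : ℝ) : ℝ :=
  sSup {M : ℝ | volume {y ∈ cube n c l | g y < M} ≤ ENNReal.ofReal t * volume (cube n c l)}

/-- `m♯_f(1-s, Q) = inf_a m_{|f-a|}(1-s, Q)`. -/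
def sharpMedianOn (n : ℕ) (f : (Fin n → ℝ) → ℝ) (s : ℝ) (c : Fin n → ℝ) (l : ℝ) : ℝ :=
  ⨅ a : ℝ, medianOn n (fun y => |f y - a|) (1 - s) c l

/-- `Φ` satisfies condition `C`. -/
def CondC (Φ : ℝ → ℝ) : Prop :=
  Continuous Φ ∧ MonotoneOn Φ (Set.Ici 0) ∧ Φ 0 = 0 ∧
    ∃ c > 0, ∀ t > 0, Φ (2 * t) ≤ c * Φ t

/-- A weight: nonnegative and locally integrable. -/
def IsWeight (n : ℕ) (w : (Fin n → ℝ) → ℝ) : Prop :=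
  (∀ x, 0 ≤ w x) ∧ LocallyIntegrable w volume

/-- The pair of weights `(w, v)` satisfies condition `F`. -/
def CondF (n : ℕ) (w v : (Fin n → ℝ) → ℝ) : Prop :=
  ∃ c > 0, ∃ β > 0, ∃ α : ℝ, 0 < α ∧ α < 1 ∧
    ∀ (cc : Fin n → ℝ) (l : ℝ), 0 < l → ∀ E : Set (Fin n → ℝ),
      MeasurableSet E → E ⊆ cube n cc l →
      volume E ≤ ENNReal.ofReal α * volume (cube n cc l) →
      ∫ x in E, w x ≤
        c * ((volume E).toReal / (volume (cube n cc l)).toReal) ^ β *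
          ∫ x in cube n cc l \ E, v x

/-- A bounded, compactly supported, measurable function. -/
def NiceFun (n : ℕ) (f : (Fin n → ℝ) → ℝ) : Prop :=
  Measurable f ∧ HasCompactSupport f ∧ ∃ M : ℝ, ∀ x, |f x| ≤ M

/-- `m_g(t, Q₀) → 0` as the cubes `Q₀` increase to `ℝⁿ`. -/
def MedianTendstoZero (n : ℕ) (g : (Fin n → ℝ) → ℝ) (t : ℝ) : Prop :=
  ∀ ε > 0, ∃ R > 0, ∀ (c : Fin n → ℝ) (l : ℝ), 0 < l →
    cube n (fun _ => 0) R ⊆ cube n c l → |medianOn n g t c l| < ε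

/-- A Young function. -/
def IsYoung (Φ : ℝ → ℝ) : Prop :=
  ConvexOn ℝ (Set.Ici 0) Φ ∧ Continuous Φ ∧ MonotoneOn Φ (Set.Ici 0) ∧ Φ 0 = 0 ∧
  (∃ c > 0, ∀ t > 0, Φ (2 * t) ≤ c * Φ t) ∧
  Tendsto (fun t => Φ t / t) atTop atTop

/-- Generalized inverse of a Young function. -/
def youngInv (Φ : ℝ → ℝ) (t : ℝ) : ℝ :=
  sInf {s : ℝ | 0 ≤ s ∧ t ≤ Φ s}

/-- The conjugate Young function `Ā(s) = sup_{t>0} (st - A(t))`. -/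
def conjYoung (A : ℝ → ℝ) (s : ℝ) : ℝ :=
  sSup {v : ℝ | ∃ t > 0, v = s * t - A t}

/-- Unnormalized Luxemburg norm `‖f‖_{L^Φ_Q}`. -/
def luxNorm (n : ℕ) (Φ : ℝ → ℝ) (Q : Set (Fin n → ℝ)) (f : (Fin n → ℝ) → ℝ) : ℝ≥0∞ :=
  sInf {lam : ℝ≥0∞ | 0 < lam ∧
    ∫⁻ y in Q, ENNReal.ofReal (Φ (|f y| / lam.toReal)) ≤ 1}

/-- Normalized Luxemburg average `‖f‖_{L^A(Q)}` (i.e. `(1/|Q|)∫_Q A(|f|/λ) ≤ 1`). -/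
def luxAvg (n : ℕ) (A : ℝ → ℝ) (Q : Set (Fin n → ℝ)) (f : (Fin n → ℝ) → ℝ) : ℝ≥0∞ :=
  sInf {lam : ℝ≥0∞ | 0 < lam ∧
    ∫⁻ y in Q, ENNReal.ofReal (A (|f y| / lam.toReal)) ≤ volume Q}

/-- Luxemburg norm on all of `ℝⁿ`. -/
def luxNormGlobal (n : ℕ) (Φ : ℝ → ℝ) (f : (Fin n → ℝ) → ℝ) : ℝ≥0∞ :=
  sInf {lam : ℝ≥0∞ | 0 < lam ∧
    ∫⁻ y, ENNReal.ofReal (Φ (|f y| / lam.toReal)) ≤ 1}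

/-- Orlicz fractional maximal function `M_{γ,A} f(x) = sup_{Q ∋ x} |Q|^γ ‖f‖_{L^A(Q)}`. -/
def orliczMax (n : ℕ) (γ : ℝ) (A : ℝ → ℝ) (f : (Fin n → ℝ) → ℝ) (x : Fin n → ℝ) : ℝ≥0∞ :=
  ⨆ (c : Fin n → ℝ) (l : ℝ) (_ : 0 < l) (_ : x ∈ cube n c l),
    volume (cube n c l) ^ γ * luxAvg n A (cube n c l) f

/-- Generalized Orlicz–Morrey norm `‖f‖_{𝓜^{Φ,φ}}`. -/
def morreyNorm (n : ℕ) (Φ : ℝ → ℝ) (φ : (Fin n → ℝ) → ℝ → ℝ) (f : (Fin n → ℝ) → ℝ) : ℝ≥0∞ :=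
  ⨆ (x : Fin n → ℝ) (l : ℝ) (_ : 0 < l),
    ENNReal.ofReal ((1 / φ x l) * youngInv Φ (1 / (volume (cube n x l)).toReal)) *
      luxNorm n Φ (cube n x l) f

/-- Generalized Orlicz–Campanato seminorm `‖f‖_{𝓛^{Φ,φ}}`. -/
def campNorm (n : ℕ) (Φ : ℝ → ℝ) (φ : (Fin n → ℝ) → ℝ → ℝ) (f : (Fin n → ℝ) → ℝ) : ℝ≥0∞ :=
  ⨆ (x : Fin n → ℝ) (l : ℝ) (_ : 0 < l),
    ENNReal.ofReal ((1 / φ x l) * youngInv Φ (1 / (volume (cube n x l)).toReal)) *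
      ⨅ a : ℝ, luxNorm n Φ (cube n x l) (fun y => f y - a)

/-- The class `B_p` of Young functions. -/
def Bp (p : ℝ) (A : ℝ → ℝ) : Prop :=
  ∃ c > 0, IntegrableOn (fun t => A t / t ^ p / t) (Set.Ioi c)

/-- The class `B_{α,p}` of Cruz-Uribe and Moen (with `B_{0,p} = B_p`). -/
def Balphap (α p : ℝ) (A : ℝ → ℝ) : Prop :=
  if α = 0 then Bp p A
  else ∃ c > 0,
    IntegrableOn (fun t => A t ^ ((1 / p - α)⁻¹ / p) / t ^ (1 / p - α)⁻¹ / t) (Set.Ioi c)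

/-- The Riesz-potential-type integral `∫ |f(y)| |x-y|^{-n(1-γ)} dy`, valued in `ℝ≥0∞`. -/
def rieszPotential (n : ℕ) (γ : ℝ) (f : (Fin n → ℝ) → ℝ) (x : Fin n → ℝ) : ℝ≥0∞ :=
  ∫⁻ y, ENNReal.ofReal |f y| * ENNReal.ofReal (‖x - y‖ ^ (-((n : ℝ) * (1 - γ))))

end


section Aux

lemma cube_subset_cube {n : ℕ} {c : Fin n → ℝ} {l₁ l₂ : ℝ} (h : l₁ ≤ l₂) :
    cube n c l₁ ⊆ cube n c l₂ := fun y hy i => (hy i).trans (by linarith)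

lemma cube_eq_pi (n : ℕ) (c : Fin n → ℝ) (l : ℝ) :
    cube n c l = Set.univ.pi fun i => Set.Icc (c i - l / 2) (c i + l / 2) := by
  ext y
  simp only [cube, Set.mem_setOf_eq, Set.mem_univ_pi, Set.mem_Icc]
  refine forall_congr' fun i => ?_
  rw [abs_le]
  constructor <;> rintro ⟨h1, h2⟩ <;> constructor <;> linarith

lemma measurableSet_cube (n : ℕ) (c : Fin n → ℝ) (l : ℝ) : MeasurableSet (cube n c l) := by
  rw [cube_eq_pi]; exact MeasurableSet.univ_pi fun i => measurableSet_Icc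

lemma volume_cube (n : ℕ) (c : Fin n → ℝ) (l : ℝ) :
    volume (cube n c l) = ENNReal.ofReal l ^ n := by
  rw [cube_eq_pi, volume_pi_pi]
  have : ∀ i : Fin n, volume (Set.Icc (c i - l / 2) (c i + l / 2)) = ENNReal.ofReal l := by
    intro i; rw [Real.volume_Icc]; ring_nf
  rw [Finset.prod_congr rfl fun i _ => this i, Finset.prod_const, Finset.card_univ,
    Fintype.card_fin]

lemma center_mem_cube {n : ℕ} {c : Fin n → ℝ} {l : ℝ} (hl : 0 < l) : c ∈ cube n c l :=
  fun i => by simp; positivity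

lemma le_mul_biInf {α : Type*} {s : Set α} (hs : s.Nonempty) {K L : ℝ≥0∞} (hK : K ≠ ⊤)
    {g : α → ℝ≥0∞} (h : ∀ y ∈ s, L ≤ K * g y) : L ≤ K * ⨅ y ∈ s, g y := by
  rcases eq_or_ne K 0 with rfl | hK0
  · obtain ⟨y, hy⟩ := hs
    simpa using h y hy
  · have h1 : L / K ≤ ⨅ y ∈ s, g y := le_iInf₂ fun y hy => ENNReal.div_le_of_le_mul' (h y hy)
    calc L = L / K * K := (ENNReal.div_mul_cancel hK0 hK).symm
    _ ≤ (⨅ y ∈ s, g y) * K := by gcongr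
    _ = K * ⨅ y ∈ s, g y := mul_comm _ _

lemma two_le_pow_succ (i : ℕ) : (2:ℝ) ≤ 2 ^ (i + 1) := by
  calc (2:ℝ) = 2 ^ 1 := (pow_one 2).symm
  _ ≤ 2 ^ (i + 1) := pow_le_pow_right₀ one_le_two (by omega)

lemma cube_compl_eq_iUnion (n : ℕ) (c : Fin n → ℝ) {l : ℝ} (hl : 0 < l) :
    (cube n c (2 * l))ᶜ =
      ⋃ i : ℕ, (cube n c (2 ^ (i + 2) * l) \ cube n c (2 ^ (i + 1) * l)) := by
  ext y
  simp only [Set.mem_compl_iff, Set.mem_iUnion, Set.mem_diff]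
  constructor
  · intro hy
    classical
    have hex : ∃ m : ℕ, y ∈ cube n c (2 ^ (m + 1) * l) := by
      obtain ⟨m, hm⟩ := pow_unbounded_of_one_lt (‖y - c‖ * 2 / l) (one_lt_two : (1:ℝ) < 2)
      refine ⟨m, fun i => ?_⟩
      have h1 : |y i - c i| ≤ ‖y - c‖ := by
        simpa [Real.norm_eq_abs] using norm_le_pi_norm (y - c) i
      have h2 : ‖y - c‖ * 2 < 2 ^ m * l := by
        rw [div_lt_iff₀ hl] at hm; linarith
      have h3 : (2:ℝ) ^ m * l ≤ 2 ^ (m + 1) * l := by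
        have : (2:ℝ) ^ m ≤ 2 ^ (m + 1) := pow_le_pow_right₀ one_le_two (by omega)
        nlinarith
      nlinarith
    have h0 : Nat.find hex ≠ 0 := by
      intro h
      apply hy
      have h2 := Nat.find_spec hex
      rw [h] at h2
      have : (2:ℝ) ^ (0 + 1) * l = 2 * l := by norm_num
      rwa [this] at h2
    obtain ⟨i, hi⟩ := Nat.exists_eq_succ_of_ne_zero h0
    refine ⟨i, ?_, ?_⟩
    · have h2 := Nat.find_spec hex
      rw [hi] at h2
      exact h2
    · exact Nat.find_min hex (by omega)
  · rintro ⟨i, hi1, hi2⟩ hmem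
    exact hi2 (cube_subset_cube (by nlinarith [two_le_pow_succ i]) hmem)

lemma annuli_disjoint (n : ℕ) (c : Fin n → ℝ) {l : ℝ} (hl : 0 < l) :
    Pairwise (Function.onFun Disjoint
      fun i : ℕ => (cube n c (2 ^ (i + 2) * l) \ cube n c (2 ^ (i + 1) * l))) := by
  have key : ∀ i j : ℕ, i < j → Disjoint
      (cube n c (2 ^ (i + 2) * l) \ cube n c (2 ^ (i + 1) * l))
      (cube n c (2 ^ (j + 2) * l) \ cube n c (2 ^ (j + 1) * l)) := by
    intro i j hij
    rw [Set.disjoint_left]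
    rintro x ⟨hx1, -⟩ ⟨-, hx2⟩
    apply hx2
    refine cube_subset_cube ?_ hx1
    have : (2:ℝ) ^ (i + 2) ≤ 2 ^ (j + 1) := pow_le_pow_right₀ one_le_two (by omega)
    nlinarith
  intro i j hij
  rcases hij.lt_or_gt with h | h
  · exact key i j h
  · exact (key j i h).symm

lemma omega_sum_le {ω : ℝ → ℝ} {cn : ℝ} (hcn : 0 < cn)
    (hmono : ∀ ⦃s t : ℝ⦄, 0 < s → s ≤ t → ω s ≤ ω t) (hnn : ∀ t, 0 < t → 0 ≤ ω t)
    (hint : IntegrableOn (fun t => ω (cn * t) / t) (Set.Ioo (0 : ℝ) 1)) :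
    ∑' i : ℕ, ENNReal.ofReal (ω (cn * 2 ^ (-(i : ℝ) - 1))) ≤
      ENNReal.ofReal (2 * ∫ t in Set.Ioo (0 : ℝ) 1, ω (cn * t) / t) := by
  set g : ℝ → ℝ := fun t => ω (cn * t) / t with hg
  set J : ℕ → Set ℝ := fun i => Set.Ioo ((2:ℝ) ^ (-(i:ℝ) - 1)) ((2:ℝ) ^ (-(i:ℝ))) with hJ
  set w : ℕ → ℝ := fun i => ω (cn * 2 ^ (-(i:ℝ) - 1)) with hw
  have hwnn : ∀ i, 0 ≤ w i := fun i => hnn _ (by positivity)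
  have hJsub : ∀ i, J i ⊆ Set.Ioo (0:ℝ) 1 := by
    intro i
    apply Set.Ioo_subset_Ioo (Real.rpow_pos_of_pos two_pos _).le
    calc (2:ℝ) ^ (-(i:ℝ)) ≤ 2 ^ (0:ℝ) :=
      Real.rpow_le_rpow_of_exponent_le one_le_two (by simp)
    _ = 1 := Real.rpow_zero 2
  have hJint : ∀ i, IntegrableOn g (J i) := fun i => hint.mono_set (hJsub i)
  have hgnn : ∀ t ∈ Set.Ioo (0:ℝ) 1, 0 ≤ g t := fun t ht =>
    div_nonneg (hnn _ (mul_pos hcn ht.1)) ht.1.le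
  have hJvol : ∀ i, volume (J i) = ENNReal.ofReal ((2:ℝ) ^ (-(i:ℝ) - 1)) := by
    intro i
    rw [hJ]
    simp only [Real.volume_Ioo]
    congr 1
    have : (2:ℝ) ^ (-(i:ℝ)) = 2 ^ (-(i:ℝ) - 1) * 2 := by
      rw [← Real.rpow_add_one (by norm_num : (2:ℝ) ≠ 0) (-(i:ℝ) - 1)]
      norm_num
    rw [this]; ring
  have hper : ∀ i : ℕ, w i ≤ 2 * ∫ t in J i, g t := by
    intro i
    have hconst : ∫ t in J i, (w i * 2 ^ (i:ℝ)) ≤ ∫ t in J i, g t := by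
      refine setIntegral_mono_on (by
        refine integrableOn_const ?_
        rw [hJvol]; exact ENNReal.ofReal_ne_top) (hJint i) measurableSet_Ioo ?_
      intro t ht
      have ht0 : 0 < t := lt_trans (by positivity) ht.1
      have h1 : ω (cn * 2 ^ (-(i:ℝ) - 1)) ≤ ω (cn * t) :=
        hmono (by positivity) (by nlinarith [ht.1])
      have h2 : (2:ℝ) ^ (i:ℝ) ≤ t⁻¹ := by
        have ha : (2:ℝ) ^ (-(i:ℝ)) = ((2:ℝ) ^ (i:ℝ))⁻¹ := by
          rw [← Real.rpow_neg (by norm_num : (0:ℝ) ≤ 2)]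
        have hb : t ≤ ((2:ℝ) ^ (i:ℝ))⁻¹ := by rw [← ha]; exact ht.2.le
        have hc := inv_anti₀ ht0 hb
        rwa [inv_inv] at hc
      have hgt : g t = ω (cn * t) * t⁻¹ := by rw [hg]; simp [div_eq_mul_inv]
      rw [hgt]
      exact mul_le_mul h1 h2 (le_of_lt (Real.rpow_pos_of_pos two_pos _))
        (hnn _ (mul_pos hcn ht0))
    have key : (2:ℝ) ^ (-(i:ℝ) - 1) * 2 ^ (i:ℝ) = 1 / 2 := by
      rw [← Real.rpow_add (by norm_num : (0:ℝ) < 2)]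
      rw [show -(i:ℝ) - 1 + (i:ℝ) = -1 by ring, Real.rpow_neg_one]
      norm_num
    have hval : ∫ _t in J i, (w i * 2 ^ (i:ℝ)) = w i / 2 := by
      rw [setIntegral_const, measureReal_def, hJvol,
        ENNReal.toReal_ofReal (Real.rpow_pos_of_pos two_pos _).le, smul_eq_mul]
      linear_combination (w i) * key
    rw [hval] at hconst
    linarith [hconst]
  apply Summable.tsum_le_of_sum_le ENNReal.summable
  intro u
  rw [← ENNReal.ofReal_sum_of_nonneg (fun i _ => hwnn i)]
  apply ENNReal.ofReal_le_ofReal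
  have hdisj : ∀ i j : ℕ, i < j → Disjoint (J i) (J j) := by
    intro i j hij
    rw [Set.disjoint_left]
    rintro x ⟨hx1, -⟩ ⟨-, hx2⟩
    have : (2:ℝ) ^ (-(j:ℝ)) ≤ 2 ^ (-(i:ℝ) - 1) := by
      apply Real.rpow_le_rpow_of_exponent_le one_le_two
      have : (i:ℝ) + 1 ≤ (j:ℝ) := by exact_mod_cast hij
      linarith
    linarith
  have hpair : Pairwise (Function.onFun Disjoint J) := by
    intro i j hij
    rcases hij.lt_or_gt with h | h
    · exact hdisj i j h
    · exact (hdisj j i h).symm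
  calc ∑ i ∈ u, w i ≤ ∑ i ∈ u, 2 * ∫ t in J i, g t := Finset.sum_le_sum fun i _ => hper i
  _ = 2 * ∑ i ∈ u, ∫ t in J i, g t := by rw [Finset.mul_sum]
  _ = 2 * ∫ t in ⋃ i ∈ u, J i, g t := by
      rw [integral_biUnion_finset u (fun i _ => measurableSet_Ioo)
        (hpair.set_pairwise _) (fun i _ => hJint i)]
  _ ≤ 2 * ∫ t in Set.Ioo (0:ℝ) 1, g t := by
      apply mul_le_mul_of_nonneg_left ?_ (by norm_num)
      apply setIntegral_mono_set hint
      · exact (ae_restrict_iff' measurableSet_Ioo).2 (ae_of_all _ hgnn)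
      · exact HasSubset.Subset.eventuallyLE (Set.iUnion₂_subset fun i _ => hJsub i)

end Aux

/-- Estimate (2.6)/(2.7): for `f₂ = f·1_{(2Q)ᶜ}` and `z ∈ Q`,
`|Tf₂(z) - Tf₂(x_Q)| ≤ c (∫₀¹ ω(cₙ t) dt/t) inf_{y ∈ Q} M_γ f(y)`. -/
theorem far_part_oscillation_estimate
    (n : ℕ) (hn : 1 ≤ n) (γ : ℝ) (hγ0 : 0 < γ) (hγ1 : γ < 1)
    (k : (Fin n → ℝ) → (Fin n → ℝ) → ℝ) (ω : ℝ → ℝ) (cn : ℝ)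
    (hcn : DimConst n cn) (hk : DiniKernel n γ k ω cn) :
    ∃ c : ℝ, 0 < c ∧ ∀ (xQ : Fin n → ℝ) (l : ℝ), 0 < l →
      ∀ f : (Fin n → ℝ) → ℝ, LocallyIntegrable f volume →
        (∀ z ∈ cube n xQ l, IntegrableOn (fun y => k z y * f y) (cube n xQ (2 * l))ᶜ) →
        ∀ z ∈ cube n xQ l,
          ENNReal.ofReal
              |(∫ y in (cube n xQ (2 * l))ᶜ, k z y * f y) -
                ∫ y in (cube n xQ (2 * l))ᶜ, k xQ y * f y| ≤
            ENNReal.ofReal (c * ∫ t in Set.Ioo (0 : ℝ) 1, ω (cn * t) / t) *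
              ⨅ y ∈ cube n xQ l, fracMax n γ 1 f y := by
  obtain ⟨hωmono, hωnn, hωint, C, hC, hker⟩ := hk
  obtain ⟨hcn0, hdim⟩ := hcn
  refine ⟨2 * (C * 8 ^ n), by positivity, ?_⟩
  intro xQ l hl f hf hf2 z hz
  set I : ℝ := ∫ t in Set.Ioo (0 : ℝ) 1, ω (cn * t) / t with hIdef
  have hInn : 0 ≤ I := by
    apply setIntegral_nonneg measurableSet_Ioo
    intro t ht
    exact div_nonneg (hωnn _ (mul_pos hcn0 ht.1)) ht.1.le
  apply le_mul_biInf ⟨z, hz⟩ ENNReal.ofReal_ne_top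
  intro y₀ hy₀
  rcases eq_or_ne z xQ with rfl | hzx
  · simp only [sub_self, abs_zero, ENNReal.ofReal_zero]
    exact zero_le
  have hxQ : xQ ∈ cube n xQ l := center_mem_cube hl
  have hgint : IntegrableOn (fun y => k z y * f y - k xQ y * f y) (cube n xQ (2 * l))ᶜ :=
    (hf2 z hz).sub (hf2 xQ hxQ)
  have hsub : (∫ y in (cube n xQ (2 * l))ᶜ, k z y * f y) -
      ∫ y in (cube n xQ (2 * l))ᶜ, k xQ y * f y =
      ∫ y in (cube n xQ (2 * l))ᶜ, (k z y * f y - k xQ y * f y) :=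
    (integral_sub (hf2 z hz) (hf2 xQ hxQ)).symm
  rw [hsub]
  set A : ℕ → Set (Fin n → ℝ) :=
    fun i => cube n xQ (2 ^ (i + 2) * l) \ cube n xQ (2 ^ (i + 1) * l) with hA
  have hAmeas : ∀ i, MeasurableSet (A i) :=
    fun i => (measurableSet_cube _ _ _).diff (measurableSet_cube _ _ _)
  set w : ℕ → ℝ := fun i => ω (cn * 2 ^ (-(i:ℝ) - 1)) with hw
  have hwnn : ∀ i, 0 ≤ w i := fun i => hωnn _ (by positivity)
  set F : ℝ≥0∞ := fracMax n γ 1 f y₀ with hF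
  set e : ℝ := -((n : ℝ) * (1 - γ)) with he
  have hen : e ≤ 0 := by
    rw [he]
    have h1 : (0:ℝ) ≤ (n:ℝ) * (1 - γ) := mul_nonneg (Nat.cast_nonneg n) (by linarith)
    linarith
  -- fractional maximal bound for the dilated cubes
  have hfrac : ∀ i : ℕ,
      ENNReal.ofReal ((2 ^ (i + 2) * l) ^ ((n:ℝ) * (γ - 1))) *
        ∫⁻ y in cube n xQ (2 ^ (i + 2) * l), ENNReal.ofReal |f y| ≤ F := by
    intro i
    set s : ℝ := 2 ^ (i + 2) * l with hs
    have hs0 : 0 < s := by positivity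
    have hVeq : volume (cube n xQ s) = ENNReal.ofReal s ^ n := volume_cube _ _ _
    have hV0 : ENNReal.ofReal s ^ n ≠ 0 := by
      apply pow_ne_zero
      simp only [ne_eq, ENNReal.ofReal_eq_zero, not_le]
      exact hs0
    have hVt : ENNReal.ofReal s ^ n ≠ ⊤ := ENNReal.pow_ne_top ENNReal.ofReal_ne_top
    have hy₀s : y₀ ∈ cube n xQ s := by
      apply cube_subset_cube ?_ hy₀
      rw [hs]
      nlinarith [two_le_pow_succ (i + 1)]
    rw [hF, fracMax]
    apply le_iSup_of_le xQ
    apply le_iSup_of_le s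
    apply le_iSup_of_le hs0
    apply le_iSup_of_le hy₀s
    rw [show (1:ℝ)/1 = 1 by norm_num]
    simp only [ENNReal.rpow_one]
    rw [hVeq, ← mul_assoc]
    have hb0 : ENNReal.ofReal s ≠ 0 := by
      simp only [ne_eq, ENNReal.ofReal_eq_zero, not_le]; exact hs0
    have hbt : ENNReal.ofReal s ≠ ⊤ := ENNReal.ofReal_ne_top
    have hfac : (ENNReal.ofReal s ^ n) ^ γ * (ENNReal.ofReal s ^ n)⁻¹ =
        ENNReal.ofReal (s ^ ((n:ℝ) * (γ - 1))) := by
      calc (ENNReal.ofReal s ^ n) ^ γ * (ENNReal.ofReal s ^ n)⁻¹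
          = (ENNReal.ofReal s ^ ((n:ℝ))) ^ γ * (ENNReal.ofReal s ^ ((n:ℝ)))⁻¹ := by
            rw [ENNReal.rpow_natCast]
      _ = ENNReal.ofReal s ^ ((n:ℝ) * γ) * ENNReal.ofReal s ^ (-(n:ℝ)) := by
            rw [← ENNReal.rpow_mul, ← ENNReal.rpow_neg]
      _ = ENNReal.ofReal s ^ ((n:ℝ) * γ + -(n:ℝ)) :=
            (ENNReal.rpow_add _ _ hb0 hbt).symm
      _ = ENNReal.ofReal s ^ ((n:ℝ) * (γ - 1)) := by congr 1; ring
      _ = ENNReal.ofReal (s ^ ((n:ℝ) * (γ - 1))) := ENNReal.ofReal_rpow_of_pos hs0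
    rw [hfac]
  -- per-annulus estimate
  have hannulus : ∀ i : ℕ,
      (∫⁻ y in A i, ENNReal.ofReal |k z y * f y - k xQ y * f y|) ≤
        ENNReal.ofReal (w i) * (ENNReal.ofReal (C * 8 ^ n) * F) := by
    intro i
    set s : ℝ := 2 ^ (i + 2) * l with hs
    have hs0 : 0 < s := by positivity
    have hpoint : ∀ y ∈ A i, ENNReal.ofReal |k z y * f y - k xQ y * f y| ≤
        ENNReal.ofReal (C * (s / 8) ^ e * w i) * ENNReal.ofReal |f y| := by
      intro y hy
      obtain ⟨hy1, hy2⟩ := hy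
      have h2pow : (2:ℝ) ≤ 2 ^ (i + 1) := two_le_pow_succ i
      have hy2l : y ∉ cube n xQ (2 * l) := fun h =>
        hy2 (cube_subset_cube (by nlinarith) h)
      have hker' := hker xQ l hl z xQ y hz hxQ hy2l
      have hdim' := hdim xQ l hl (i + 1) (by omega) z xQ y hz hxQ hy2
      -- lower bound on ‖z - y‖
      have hy2' : ¬ ∀ j, |y j - xQ j| ≤ 2 ^ (i + 1) * l / 2 := hy2
      push_neg at hy2'
      obtain ⟨j, hj⟩ := hy2'
      have hzj : |z j - xQ j| ≤ l / 2 := hz j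
      have h1 : |z j - y j| ≤ ‖z - y‖ := by
        simpa [Real.norm_eq_abs] using norm_le_pi_norm (z - y) j
      have h2 : |y j - xQ j| ≤ |z j - y j| + |z j - xQ j| := by
        have := abs_sub (y j - xQ j) (y j - z j)
        calc |y j - xQ j| = |(y j - z j) + (z j - xQ j)| := by ring_nf
        _ ≤ |y j - z j| + |z j - xQ j| := abs_add_le _ _
        _ = |z j - y j| + |z j - xQ j| := by rw [abs_sub_comm (y j) (z j)]
      have hnormge : s / 8 ≤ ‖z - y‖ := by
        have hs8 : s / 8 = 2 ^ (i + 1) * l / 4 := by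
          rw [hs, pow_succ]
          ring
        rw [hs8]
        nlinarith
      have hzy0 : (0:ℝ) < ‖z - y‖ := lt_of_lt_of_le (by positivity) hnormge
      have hzx0 : (0:ℝ) < ‖z - xQ‖ := by
        rw [norm_pos_iff]
        exact sub_ne_zero_of_ne hzx
      have hexp : (2:ℝ) ^ (-(((i + 1 : ℕ)):ℝ)) = 2 ^ (-(i:ℝ) - 1) := by
        congr 1
        push_cast
        ring
      have harg : ‖z - xQ‖ / ‖z - y‖ ≤ cn * 2 ^ (-(i:ℝ) - 1) := by
        rw [div_le_iff₀ hzy0]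
        rw [← hexp]
        exact hdim'
      have hωle : ω (‖z - xQ‖ / ‖z - y‖) ≤ w i :=
        hωmono (div_pos hzx0 hzy0) harg
      have hω0 : 0 ≤ ω (‖z - xQ‖ / ‖z - y‖) := hωnn _ (div_pos hzx0 hzy0)
      have hpow : ‖z - y‖ ^ e ≤ (s / 8) ^ e :=
        Real.rpow_le_rpow_of_nonpos (by positivity) hnormge hen
      have hk2 : |k z y - k xQ y| ≤ C * (s / 8) ^ e * w i := by
        calc |k z y - k xQ y| ≤ C * ‖z - y‖ ^ e * ω (‖z - xQ‖ / ‖z - y‖) := hker'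
        _ ≤ C * (s / 8) ^ e * w i :=
          mul_le_mul (mul_le_mul_of_nonneg_left hpow hC.le) hωle hω0
            (by positivity)
      have habs : |k z y * f y - k xQ y * f y| ≤ (C * (s / 8) ^ e * w i) * |f y| := by
        have heq : k z y * f y - k xQ y * f y = (k z y - k xQ y) * f y := by ring
        rw [heq, abs_mul]
        exact mul_le_mul_of_nonneg_right hk2 (abs_nonneg _)
      have hnn2 : 0 ≤ C * (s / 8) ^ e * w i :=
        mul_nonneg (mul_nonneg hC.le (Real.rpow_nonneg (by positivity) _)) (hwnn i)
      rw [← ENNReal.ofReal_mul hnn2]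
      exact ENNReal.ofReal_le_ofReal habs
    have hcoef : C * (s / 8) ^ e * w i ≤ w i * (C * 8 ^ n) * s ^ ((n:ℝ) * (γ - 1)) := by
      have h8 : (s / 8) ^ e = s ^ e * ((8:ℝ) ^ e)⁻¹ := by
        rw [Real.div_rpow hs0.le (by norm_num : (0:ℝ) ≤ 8), div_eq_mul_inv]
      have hse : s ^ e = s ^ ((n:ℝ) * (γ - 1)) := by
        congr 1
        rw [he]; ring
      have h8n : ((8:ℝ) ^ e)⁻¹ ≤ 8 ^ (n:ℝ) := by
        rw [← Real.rpow_neg (by norm_num : (0:ℝ) ≤ 8) e]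
        apply Real.rpow_le_rpow_of_exponent_le (by norm_num)
        rw [he, neg_neg]
        nlinarith [Nat.cast_nonneg (α := ℝ) n]
      have h8pos : (0:ℝ) ≤ ((8:ℝ) ^ e)⁻¹ := by positivity
      have h8nn : (8:ℝ) ^ (n:ℝ) = 8 ^ n := Real.rpow_natCast 8 n
      calc C * (s / 8) ^ e * w i
          = (C * w i * s ^ ((n:ℝ) * (γ - 1))) * ((8:ℝ) ^ e)⁻¹ := by
            rw [h8, hse]; ring
      _ ≤ (C * w i * s ^ ((n:ℝ) * (γ - 1))) * (8:ℝ) ^ (n:ℝ) := by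
            apply mul_le_mul_of_nonneg_left h8n
            exact mul_nonneg (mul_nonneg hC.le (hwnn i)) (Real.rpow_nonneg hs0.le _)
      _ = w i * (C * 8 ^ n) * s ^ ((n:ℝ) * (γ - 1)) := by rw [h8nn]; ring
    calc (∫⁻ y in A i, ENNReal.ofReal |k z y * f y - k xQ y * f y|)
        ≤ ∫⁻ y in A i, ENNReal.ofReal (C * (s / 8) ^ e * w i) * ENNReal.ofReal |f y| :=
          lintegral_mono_ae ((ae_restrict_iff' (hAmeas i)).2 (ae_of_all _ hpoint))
    _ = ENNReal.ofReal (C * (s / 8) ^ e * w i) * ∫⁻ y in A i, ENNReal.ofReal |f y| :=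
          lintegral_const_mul' _ _ ENNReal.ofReal_ne_top
    _ ≤ ENNReal.ofReal (C * (s / 8) ^ e * w i) *
          ∫⁻ y in cube n xQ s, ENNReal.ofReal |f y| :=
          mul_le_mul_right (lintegral_mono' (Measure.restrict_mono
            (fun y hy => hy.1) le_rfl) le_rfl) _
    _ ≤ (ENNReal.ofReal (w i) * ENNReal.ofReal (C * 8 ^ n)) *
          (ENNReal.ofReal (s ^ ((n:ℝ) * (γ - 1))) *
            ∫⁻ y in cube n xQ s, ENNReal.ofReal |f y|) := by
          rw [← mul_assoc]
          apply mul_le_mul_left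
          rw [← ENNReal.ofReal_mul (hwnn i),
            ← ENNReal.ofReal_mul (mul_nonneg (hwnn i) (by positivity))]
          exact ENNReal.ofReal_le_ofReal hcoef
    _ ≤ ENNReal.ofReal (w i) * (ENNReal.ofReal (C * 8 ^ n) * F) := by
          rw [mul_assoc]
          exact mul_le_mul_right (mul_le_mul_right (hfrac i) _) _
  -- putting it together
  calc ENNReal.ofReal |∫ y in (cube n xQ (2 * l))ᶜ, (k z y * f y - k xQ y * f y)|
      ≤ ENNReal.ofReal (∫ y in (cube n xQ (2 * l))ᶜ, |k z y * f y - k xQ y * f y|) := by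
        apply ENNReal.ofReal_le_ofReal
        simpa [Real.norm_eq_abs] using
          norm_integral_le_integral_norm (μ := volume.restrict (cube n xQ (2 * l))ᶜ)
            (fun y => k z y * f y - k xQ y * f y)
  _ = ∫⁻ y in (cube n xQ (2 * l))ᶜ, ENNReal.ofReal |k z y * f y - k xQ y * f y| :=
        ofReal_integral_eq_lintegral_ofReal hgint.abs (ae_of_all _ fun y => abs_nonneg _)
  _ = ∑' i : ℕ, ∫⁻ y in A i, ENNReal.ofReal |k z y * f y - k xQ y * f y| := by
        rw [cube_compl_eq_iUnion n xQ hl, lintegral_iUnion hAmeas (annuli_disjoint n xQ hl)]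
  _ ≤ ∑' i : ℕ, ENNReal.ofReal (w i) * (ENNReal.ofReal (C * 8 ^ n) * F) :=
        ENNReal.tsum_le_tsum hannulus
  _ = (∑' i : ℕ, ENNReal.ofReal (w i)) * (ENNReal.ofReal (C * 8 ^ n) * F) :=
        ENNReal.tsum_mul_right
  _ ≤ ENNReal.ofReal (2 * I) * (ENNReal.ofReal (C * 8 ^ n) * F) := by
        apply mul_le_mul_left
        exact omega_sum_le hcn0 hωmono hωnn hωint
  _ = ENNReal.ofReal (2 * (C * 8 ^ n) * I) * F := by
        rw [← mul_assoc, ← ENNReal.ofReal_mul (by positivity)]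
        congr 2
        ring
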